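/- Let L be a 2-step nilpotent Camina Lie algebra over an algebraically closed field k. Then the derived subalgebra L' has dimension 1; in particular, L has breadth type (0,1). -/

import Mathlib

set_option maxHeartbeats 1600000


/- Common definitions: breadth, breadth type, derived subalgebra, Camina Lie algebras,
nilpotency class, minimal generation, and free nilpotent Lie algebras. -/

open Module

section Defs

variable (k : Type*) [Field k]

/-- The breadth of an element `x` of a Lie algebra: the rank of the adjoint map `ad x`
(equivalently, the codimension of the centralizer of `x`). -/
noncomputable def breadth (L : Type*) [LieRing L] [LieAlgebra k L] (x : L) : ℕ :=
  Module.finrank k (LinearMap.range (LieAlgebra.ad k L x))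

/-- A Lie algebra has breadth type `S` if `S` is exactly the set of breadths of its elements. -/
def HasBreadthType (L : Type*) [LieRing L] [LieAlgebra k L] (S : Set ℕ) : Prop :=
  Set.range (breadth k L) = S

/-- The derived subalgebra `L' = [L, L]` as a Lie ideal. -/
abbrev derivedIdeal (L : Type*) [LieRing L] [LieAlgebra k L] : LieIdeal k L :=
  ⁅(⊤ : LieIdeal k L), (⊤ : LieIdeal k L)⁆

lemma lie_mem_derivedIdeal (L : Type*) [LieRing L] [LieAlgebra k L] (x y : L) :
    ⁅x, y⁆ ∈ derivedIdeal k L :=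
  LieSubmodule.lie_mem_lie (LieSubmodule.mem_top x) (LieSubmodule.mem_top y)

/-- A Camina Lie algebra: `[x, L] = L'` for every `x ∈ L \ L'`. -/
def IsCamina (L : Type*) [LieRing L] [LieAlgebra k L] : Prop :=
  ∀ x : L, x ∉ derivedIdeal k L →
    LinearMap.range (LieAlgebra.ad k L x) = (derivedIdeal k L).toSubmodule

/-- A Lie algebra is nilpotent of class exactly `c`. -/
def IsNilpotentOfClass (L : Type*) [LieRing L] [LieAlgebra k L] (c : ℕ) : Prop :=
  LieModule.lowerCentralSeries k L L c = ⊥ ∧ ∀ b < c, LieModule.lowerCentralSeries k L L b ≠ ⊥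

/-- A Lie algebra is minimally generated by `n` elements: some `n` elements generate it
and no fewer elements generate it. -/
def MinimallyGenerated (L : Type*) [LieRing L] [LieAlgebra k L] (n : ℕ) : Prop :=
  (∃ s : Finset L, s.card = n ∧ LieSubalgebra.lieSpan k L ↑s = ⊤) ∧
  ∀ s : Finset L, LieSubalgebra.lieSpan k L ↑s = ⊤ → n ≤ s.card

/-- The free `c`-step nilpotent Lie algebra on `n` generators: the quotient of the free
Lie algebra on `n` generators by the `(c+1)`-st term `γ_{c+1}` of its lower central series. -/
abbrev FreeNilp (c n : ℕ) :=
  FreeLieAlgebra k (Fin n) ⧸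
    LieModule.lowerCentralSeries k (FreeLieAlgebra k (Fin n)) (FreeLieAlgebra k (Fin n)) c

/-- The canonical generators of the free `c`-step nilpotent Lie algebra on `n` generators. -/
noncomputable def gen (c n : ℕ) (i : Fin n) : FreeNilp k c n :=
  LieSubmodule.Quotient.mk
    (N := LieModule.lowerCentralSeries k (FreeLieAlgebra k (Fin n)) (FreeLieAlgebra k (Fin n)) c)
    (FreeLieAlgebra.of k i)

end Defs

section Aux
set_option maxHeartbeats 800000

open Polynomial in
lemma my_eval_charpoly_eq_det {K : Type*} [CommRing K] {n : Type*} [Fintype n] [DecidableEq n]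
    (M : Matrix n n K) (t : K) :
    (Matrix.charpoly M).eval t = (t • (1 : Matrix n n K) - M).det := by
  rw [Matrix.charpoly, ← coe_evalRingHom, RingHom.map_det]
  congr 1
  ext i j
  by_cases h : i = j
  · subst h
    simp [Matrix.charmatrix_apply_eq, Matrix.one_apply_eq]
  · simp [Matrix.charmatrix_apply_ne _ _ _ h, Matrix.one_apply_ne h]

lemma my_exists_det_add_smul_eq_zero {K : Type*} [Field K] [IsAlgClosed K] {n : ℕ} (hn : n ≠ 0)
    (A B : Matrix (Fin n) (Fin n) K) (hB : IsUnit B.det) :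
    ∃ t : K, (A + t • B).det = 0 := by
  obtain ⟨t, ht⟩ := IsAlgClosed.exists_root (p := Matrix.charpoly (-(B⁻¹ * A)))
    (by
      rw [Matrix.charpoly_degree_eq_dim]
      simp only [Fintype.card_fin]
      exact_mod_cast hn)
  refine ⟨t, ?_⟩
  have h1 : (B⁻¹ * A + t • 1).det = 0 := by
    have h := my_eval_charpoly_eq_det (-(B⁻¹ * A)) t
    rw [sub_neg_eq_add] at h
    rw [show B⁻¹ * A + t • 1 = t • 1 + B⁻¹ * A from add_comm _ _, ← h]
    exact ht
  have h2 : A + t • B = B * (B⁻¹ * A + t • 1) := by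
    rw [Matrix.mul_add, ← Matrix.mul_assoc, Matrix.mul_nonsing_inv B hB, one_mul,
      mul_smul_comm, mul_one]
  rw [h2, Matrix.det_mul, h1, mul_zero]

end Aux

/-- a 2-step nilpotent Camina Lie algebra over an algebraically closed field
has 1-dimensional derived subalgebra; in particular, it has breadth type `(0,1)`. -/
theorem camina_alg_closed_derived_dim_one
    (k : Type*) [Field k] [IsAlgClosed k]
    (L : Type*) [LieRing L] [LieAlgebra k L] [FiniteDimensional k L]
    (h2 : IsNilpotentOfClass k L 2) (hC : IsCamina k L) :
    finrank k (derivedIdeal k L) = 1 ∧ HasBreadthType k L {0, 1} := by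
  classical
  set W : LieIdeal k L := derivedIdeal k L with hWdef
  have hlcs1 : LieModule.lowerCentralSeries k L L 1 = W := by
    rw [show (1:ℕ) = 0 + 1 from rfl, LieModule.lowerCentralSeries_succ,
      LieModule.lowerCentralSeries_zero]
  have hcent : ∀ (u w : L), w ∈ W → ⁅u, w⁆ = 0 := by
    intro u w hw
    have h : ⁅u, w⁆ ∈ LieModule.lowerCentralSeries k L L 2 := by
      rw [show (2:ℕ) = 1 + 1 from rfl, LieModule.lowerCentralSeries_succ]
      exact LieSubmodule.lie_mem_lie (LieSubmodule.mem_top u) (hlcs1 ▸ hw)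
    rw [h2.1] at h
    exact (LieSubmodule.mem_bot _).mp h
  have hWbot : W ≠ ⊥ := by have := h2.2 1 (by norm_num); rwa [hlcs1] at this
  have hWtop : W ≠ ⊤ := by
    intro h
    have hlcs2 : LieModule.lowerCentralSeries k L L 2 = W := by
      rw [show (2:ℕ) = 1 + 1 from rfl, LieModule.lowerCentralSeries_succ, hlcs1, h]
      exact h
    have h0 := h2.2 0 (by norm_num)
    rw [LieModule.lowerCentralSeries_zero] at h0
    rw [h2.1] at hlcs2
    exact h0 (by rw [← h, ← hlcs2])

  have hsWbot : (W : Submodule k L) ≠ ⊥ := fun h => hWbot ((LieSubmodule.toSubmodule_eq_bot (N := W)).mp h)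
  have hsWtop : (W : Submodule k L) ≠ ⊤ := fun h => hWtop ((LieSubmodule.toSubmodule_eq_top (N := W)).mp h)
  have key : finrank k (W : Submodule k L) = 1 := by
    refine le_antisymm ?_ ?_
    swap
    · rw [Nat.one_le_iff_ne_zero, ne_eq, Submodule.finrank_eq_zero]
      exact hsWbot
    by_contra hlt
    push_neg at hlt
    -- setup
    set sW : Submodule k L := (W : Submodule k L) with hsW
    set d := finrank k sW with hd
    have hd2 : 2 ≤ d := hlt
    let bW := finBasis k sW
    let lam : sW →ₗ[k] k := bW.coord ⟨0, by omega⟩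
    let mu : sW →ₗ[k] k := bW.coord ⟨1, by omega⟩
    have hVnt : Nontrivial (L ⧸ sW) :=
      (Submodule.Quotient.nontrivial_iff (p := sW)).mpr hsWtop
    set n := finrank k (L ⧸ sW) with hn
    have hn0 : n ≠ 0 := (Module.finrank_pos (R := k) (M := L ⧸ sW)).ne'
    let bV := finBasis k (L ⧸ sW)
    have hxex : ∀ i : Fin n, ∃ z : L, Submodule.Quotient.mk z = bV i := fun i =>
      Submodule.Quotient.mk_surjective sW (bV i)
    choose x hx using hxex
    -- the bilinear map into sW
    let F : L →ₗ[k] L →ₗ[k] sW := LinearMap.mk₂ k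
      (fun a b => (⟨⁅a, b⁆, lie_mem_derivedIdeal k L a b⟩ : sW))
      (fun a a' b => Subtype.ext (add_lie a a' b))
      (fun c a b => Subtype.ext (smul_lie c a b))
      (fun a b b' => Subtype.ext (lie_add a b b'))
      (fun c a b => Subtype.ext (lie_smul c a b))
    let Mat : (sW →ₗ[k] k) → Matrix (Fin n) (Fin n) k := fun nu =>
      Matrix.of fun i j => nu (F (x i) (x j))
    have hdet : ∀ nu : sW →ₗ[k] k, nu ≠ 0 → (Mat nu).det ≠ 0 := by
      intro nu hnu hdet0
      obtain ⟨c, hc0, hc⟩ := (Matrix.exists_vecMul_eq_zero_iff).mpr hdet0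
      set y := ∑ i, c i • x i with hy
      have hmky : (Submodule.Quotient.mk y : L ⧸ sW) = bV.equivFun.symm c := by
        rw [Basis.equivFun_symm_apply, hy]
        rw [show (Submodule.Quotient.mk (∑ i, c i • x i) : L ⧸ sW) = sW.mkQ (∑ i, c i • x i) from rfl]
        rw [map_sum]
        simp [hx]
        rfl
      have hyW : y ∉ W := by
        intro hmem
        apply hc0
        have hz : (Submodule.Quotient.mk y : L ⧸ sW) = 0 :=
          (Submodule.Quotient.mk_eq_zero sW).mpr hmem
        rw [hmky] at hz
        exact (LinearEquiv.map_eq_zero_iff bV.equivFun.symm).mp hz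
      have hFy : ∀ b : L, F y b = ∑ i, c i • F (x i) b := by
        intro b
        rw [hy]
        simp [map_sum]
      have hrow : ∀ j, nu (F y (x j)) = 0 := by
        intro j
        have hj : (Matrix.vecMul c (Mat nu)) j = 0 := by rw [hc]; rfl
        rw [hFy, map_sum]
        rw [← hj]
        simp [Matrix.vecMul, dotProduct, Mat, smul_eq_mul]
      have hall : ∀ u : L, nu (F y u) = 0 := by
        intro u
        set a := bV.equivFun (Submodule.Quotient.mk u) with ha
        set u' := ∑ j, a j • x j with hu'
        have hmk : (Submodule.Quotient.mk u' : L ⧸ sW) = Submodule.Quotient.mk u := by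
          rw [hu']
          rw [show (Submodule.Quotient.mk (∑ j, a j • x j) : L ⧸ sW) = sW.mkQ (∑ j, a j • x j) from rfl]
          rw [map_sum]
          simp only [map_smul, Submodule.mkQ_apply, hx]
          rw [show ∑ j, a j • bV j = bV.equivFun.symm a from (Basis.equivFun_symm_apply bV a).symm]
          rw [ha, LinearEquiv.symm_apply_apply]
        have hsub : u - u' ∈ sW := by
          rw [← Submodule.Quotient.eq]
          exact hmk.symm
        have h1 : F y (u - u') = 0 := Subtype.ext (hcent y (u - u') hsub)
        have hdecomp : F y u = F y u' + F y (u - u') := by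
          rw [← map_add]
          congr 1
          abel
        rw [hdecomp, h1, add_zero, hu', map_sum, map_sum]
        simp only [map_smul, smul_eq_mul]
        rw [Finset.sum_congr rfl fun j _ => by rw [hrow j]]
        simp
      obtain ⟨w, hw⟩ : ∃ w : sW, nu w ≠ 0 := by
        by_contra hwn
        push_neg at hwn
        exact hnu (LinearMap.ext fun w => by rw [hwn w, LinearMap.zero_apply])
      have hwr : (w : L) ∈ LinearMap.range (LieAlgebra.ad k L y) := by
        rw [hC y hyW]
        exact w.2
      obtain ⟨u, hu⟩ := hwr
      apply hw
      have hFu : F y u = w := Subtype.ext (show ⁅y, u⁆ = (w : L) by simpa [LieAlgebra.ad_apply] using hu)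
      rw [← hFu]
      exact hall u
    have hmu : mu ≠ 0 := by
      intro h
      have := congrArg (fun f => f (bW ⟨1, by omega⟩)) h
      simp [mu, Basis.coord_apply, Basis.repr_self] at this
    obtain ⟨t, ht⟩ := my_exists_det_add_smul_eq_zero hn0 (Mat lam) (Mat mu)
      (isUnit_iff_ne_zero.mpr (hdet mu hmu))
    have hnu : lam + t • mu ≠ 0 := by
      intro h
      have h0 := congrArg (fun f => f (bW ⟨0, by omega⟩)) h
      simp only [LinearMap.add_apply, LinearMap.smul_apply, LinearMap.zero_apply,
        smul_eq_mul] at h0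
      rw [show lam (bW ⟨0, by omega⟩) = 1 by simp [lam, Basis.coord_apply, Basis.repr_self],
        show mu (bW ⟨0, by omega⟩) = 0 by
          simp [mu, Basis.coord_apply, Basis.repr_self_apply]] at h0
      simp at h0
    apply hdet _ hnu
    have hMat : Mat (lam + t • mu) = Mat lam + t • Mat mu := by
      ext i j
      simp [Mat]
    rw [hMat]
    exact ht
  refine ⟨?_, ?_⟩
  · exact key
  · show Set.range (breadth k L) = {0, 1}
    ext m
    simp only [Set.mem_range, Set.mem_insert_iff, Set.mem_singleton_iff]
    constructor
    · rintro ⟨z, rfl⟩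
      by_cases hz : z ∈ W
      · left
        have had : LieAlgebra.ad k L z = 0 := by
          ext u
          simp only [LieAlgebra.ad_apply, LinearMap.zero_apply]
          rw [← lie_skew, hcent u z hz, neg_zero]
        simp only [breadth]
        rw [had, LinearMap.range_zero]
        exact finrank_bot k L
      · right
        simp only [breadth]
        rw [hC z hz]
        exact key
    · rintro (rfl | rfl)
      · refine ⟨0, ?_⟩
        have had : LieAlgebra.ad k L 0 = 0 := by
          ext u
          simp only [LieAlgebra.ad_apply, LinearMap.zero_apply, zero_lie]
        simp only [breadth]
        rw [had, LinearMap.range_zero]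
        exact finrank_bot k L
      · have hex : ∃ z : L, z ∉ W := by
          by_contra hall
          push_neg at hall
          exact hWtop (eq_top_iff.mpr fun z _ => hall z)
        obtain ⟨z, hz⟩ := hex
        refine ⟨z, ?_⟩
        simp only [breadth]
        rw [hC z hz]
        exact key
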